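/- Label-only equivalence of model-based AIA for logistic classification: for every public-feature vector x_p ∈ ℝ^{d−1} and every θ_p ∈ ℝ^{d−1}, if θ_s > 0 then ℓ(y) < ℓ(1−y), and if θ_s < 0 then ℓ(1−y) < ℓ(y). Consequently, the unique minimizer over s ∈ {0,1} of the binary cross-entropy loss equals y when θ_s > 0 and equals 1−y when θ_s < 0; it depends only on the label y and the sign of θ_s, and not on the public features x_p. -/

import Mathlib

open Matrix

/-- Label-only equivalence of model-based AIA for logistic classification:
for a linear classifier with sigmoid output `p(s) = 1/(1 + e^{−z(s)})`,
`z(s) = θ_p ⫁ x_p + θ_s s`, binary label `y ∈ {0,1}`, and binary cross-entropy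
loss `ℓ(s) = −(y ln p(s) + (1−y) ln(1−p(s)))`: for every `x_p` and `θ_p`, if
`θ_s > 0` then `ℓ(y) < ℓ(1−y)`, and if `θ_s < 0` then `ℓ(1−y) < ℓ(y)`.
Consequently the unique minimizer of `ℓ` over `s ∈ {0,1}` equals `y` when
`θ_s > 0` and `1−y` when `θ_s < 0`; it depends only on the label `y` and the
sign of `θ_s`, not on the public features `x_p`. -/
theorem logistic_aia_label_only
    (d : ℕ) (hd : 2 ≤ d)
    (xp θp : Fin (d - 1) → ℝ) (θs : ℝ) (hθs : θs ≠ 0)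
    (y : ℝ) (hy : y = 0 ∨ y = 1)
    (z : ℝ → ℝ) (hz : ∀ s, z s = θp ⬝ᵥ xp + θs * s)
    (p : ℝ → ℝ) (hp : ∀ s, p s = 1 / (1 + Real.exp (-(z s))))
    (ℓ : ℝ → ℝ)
    (hℓ : ∀ s, ℓ s = -(y * Real.log (p s) + (1 - y) * Real.log (1 - p s))) :
    (0 < θs → ℓ y < ℓ (1 - y))
    ∧ (θs < 0 → ℓ (1 - y) < ℓ y)
    ∧ (0 < θs → ∀ s : ℝ, (s = 0 ∨ s = 1) → s ≠ y → ℓ y < ℓ s)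
    ∧ (θs < 0 → ∀ s : ℝ, (s = 0 ∨ s = 1) → s ≠ 1 - y → ℓ (1 - y) < ℓ s) := by
  have hz0 : z 0 = θp ⬝ᵥ xp := by rw [hz]; ring
  have hz1 : z 1 = θp ⬝ᵥ xp + θs := by rw [hz]; ring
  have hpos : ∀ s : ℝ, (0:ℝ) < 1 + Real.exp (-(z s)) := fun s => by positivity
  have hlogp : ∀ s, Real.log (p s) = -Real.log (1 + Real.exp (-(z s))) := by
    intro s
    rw [hp, one_div, Real.log_inv]
  have h1p : ∀ s, 1 - p s = Real.exp (-(z s)) / (1 + Real.exp (-(z s))) := by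
    intro s
    rw [hp]
    field_simp
    ring
  have hlog1p : ∀ s, Real.log (1 - p s) = -(z s) - Real.log (1 + Real.exp (-(z s))) := by
    intro s
    rw [h1p, Real.log_div (Real.exp_ne_zero _) (hpos s).ne', Real.log_exp]
  have hℓ1 : y = 1 → ∀ s, ℓ s = Real.log (1 + Real.exp (-(z s))) := by
    intro h s
    rw [hℓ, hlogp, h]
    ring
  have hℓ0 : y = 0 → ∀ s, ℓ s = Real.log (Real.exp (z s) + 1) := by
    intro h s
    have : Real.exp (z s) + 1 = Real.exp (z s) * (1 + Real.exp (-(z s))) := by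
      rw [mul_add, ← Real.exp_add]
      simp [mul_comm]
    rw [hℓ, hlog1p, h, this, Real.log_mul (Real.exp_ne_zero _) (hpos s).ne',
      Real.log_exp]
    ring
  have key : ∀ a b : ℝ, z a < z b →
      (y = 0 → ℓ a < ℓ b) ∧ (y = 1 → ℓ b < ℓ a) := by
    intro a b hab
    constructor
    · intro h
      rw [hℓ0 h, hℓ0 h]
      exact Real.log_lt_log (by positivity) (by gcongr)
    · intro h
      rw [hℓ1 h, hℓ1 h]
      exact Real.log_lt_log (hpos b) (by gcongr <;> linarith)
  have main : (0 < θs → ℓ y < ℓ (1 - y)) ∧ (θs < 0 → ℓ (1 - y) < ℓ y) := by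
    constructor
    · intro hθ
      have h01 : z 0 < z 1 := by rw [hz0, hz1]; linarith
      rcases hy with h | h
      · have := (key 0 1 h01).1 h
        rw [h] at *; simpa using this
      · have := (key 0 1 h01).2 h
        rw [h] at *; simpa using this
    · intro hθ
      have h10 : z 1 < z 0 := by rw [hz0, hz1]; linarith
      rcases hy with h | h
      · have := (key 1 0 h10).1 h
        rw [h] at *; simpa using this
      · have := (key 1 0 h10).2 h
        rw [h] at *; simpa using this
  refine ⟨main.1, main.2, ?_, ?_⟩
  · intro hθ s hs hne
    have := main.1 hθ
    rcases hy with h | h <;> rcases hs with rfl | rfl <;> rw [h] at this hne ⊢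
    · exact absurd rfl hne
    · simpa using this
    · simpa using this
    · exact absurd rfl hne
  · intro hθ s hs hne
    have := main.2 hθ
    rcases hy with h | h <;> rcases hs with rfl | rfl <;> rw [h] at this hne ⊢
    · simpa using this
    · exact absurd (by norm_num) hne
    · exact absurd (by norm_num) hne
    · simpa using this
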